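/- Let K be a field of characteristic zero and α, β ∈ K. In the Lie algebra of K-linear derivations of the polynomial ring K[w] (with bracket the commutator of derivations), the elements A₀ = −2αw²(d/dw), A₁ = −(d/dw), and Y = 0 satisfy relations (R1)–(R6). Moreover, for α ≠ 0, the Lie subalgebra generated by A₀ and A₁ is the 3-dimensional span of d/dw, w(d/dw), w²(d/dw), which is isomorphic to sl₂(K). -/

import Mathlib

open Polynomial LieAlgebra.SpecialLinear

set_option linter.unusedSectionVars false
set_option maxHeartbeats 1000000

namespace Stmt19Aux

variable (K : Type*) [Field K] [CharZero K]

lemma mkd_bracket (p q : K[X]) :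
    ⁅Polynomial.mkDerivation K p, Polynomial.mkDerivation K q⁆
      = Polynomial.mkDerivation K (p * derivative q - q * derivative p) := by
  apply derivation_ext
  simp [Derivation.commutator_apply, mkDerivation_apply, smul_eq_mul]
  ring

lemma psmul_mkd (p q : K[X]) :
    p • Polynomial.mkDerivation K q = Polynomial.mkDerivation K (p * q) := by
  apply derivation_ext
  simp [Derivation.smul_apply, mkDerivation_apply, smul_eq_mul]

lemma ksmul_mkd (a : K) (q : K[X]) :
    a • Polynomial.mkDerivation K q = Polynomial.mkDerivation K (C a * q) := by
  rw [← map_smul, smul_eq_C_mul]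

lemma neg_mkd (q : K[X]) :
    -Polynomial.mkDerivation K q = Polynomial.mkDerivation K (-q) := by
  rw [map_neg]

lemma D_eq_mkd : (Polynomial.derivative' : Derivation K K[X] K[X]) = Polynomial.mkDerivation K 1 :=
  (mkDerivation_one_eq_derivative' K).symm

lemma lie_zero' (x : Derivation K K[X] K[X]) : ⁅x, (0 : Derivation K K[X] K[X])⁆ = 0 := by
  ext; simp [Derivation.commutator_apply]

lemma mkd_eq_zero (q : K[X]) (h : q = 0) :
    Polynomial.mkDerivation K q = (0 : Derivation K K[X] K[X]) := by
  rw [h, map_zero]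

lemma mkd_congr {q q' : K[X]} (h : q = q') :
    Polynomial.mkDerivation K q = Polynomial.mkDerivation K q' := by
  rw [h]

lemma mkd_inj {p q : K[X]} (h : Polynomial.mkDerivation K p = Polynomial.mkDerivation K q) :
    p = q := by
  have := congrArg (fun E : Derivation K K[X] K[X] => E X) h
  simpa [mkDerivation_X] using this

/-! ### The derivation side -/

noncomputable def v3 : Fin 3 → Derivation K K[X] K[X] :=
  ![Polynomial.mkDerivation K 1, Polynomial.mkDerivation K X, Polynomial.mkDerivation K (X^2)]

lemma v3_range : Set.range (v3 K) = {Polynomial.mkDerivation K 1, Polynomial.mkDerivation K X,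
    Polynomial.mkDerivation K (X^2)} := by
  ext x; simp [v3, Matrix.range_cons, Matrix.range_empty]; tauto

lemma br01 : ⁅Polynomial.mkDerivation K (1:K[X]), Polynomial.mkDerivation K (X:K[X])⁆
    = Polynomial.mkDerivation K (1:K[X]) := by
  rw [mkd_bracket]; apply mkd_congr; simp

lemma br02 : ⁅Polynomial.mkDerivation K (1:K[X]), Polynomial.mkDerivation K (X^2:K[X])⁆
    = (2:K) • Polynomial.mkDerivation K (X:K[X]) := by
  rw [mkd_bracket, ksmul_mkd]; apply mkd_congr
  simp only [derivative_one, derivative_X_pow, derivative_X, map_ofNat, Nat.cast_ofNat,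
    map_natCast]
  ring

lemma br12 : ⁅Polynomial.mkDerivation K (X:K[X]), Polynomial.mkDerivation K (X^2:K[X])⁆
    = Polynomial.mkDerivation K (X^2:K[X]) := by
  rw [mkd_bracket]; apply mkd_congr
  simp only [derivative_X_pow, derivative_X, map_ofNat, Nat.cast_ofNat, map_natCast]
  ring

lemma lie_mem_span {x y : Derivation K K[X] K[X]}
    (hx : x ∈ Submodule.span K {Polynomial.mkDerivation K (1:K[X]),
      Polynomial.mkDerivation K (X:K[X]), Polynomial.mkDerivation K (X^2:K[X])})
    (hy : y ∈ Submodule.span K {Polynomial.mkDerivation K (1:K[X]),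
      Polynomial.mkDerivation K (X:K[X]), Polynomial.mkDerivation K (X^2:K[X])}) :
    ⁅x, y⁆ ∈ Submodule.span K {Polynomial.mkDerivation K (1:K[X]),
      Polynomial.mkDerivation K (X:K[X]), Polynomial.mkDerivation K (X^2:K[X])} := by
  induction hx using Submodule.span_induction with
  | mem x hx =>
    induction hy using Submodule.span_induction with
    | mem y hy =>
      have hself : ∀ z : Derivation K K[X] K[X], ⁅z, z⁆ = 0 := fun z => lie_self z
      have hskew : ∀ z w : Derivation K K[X] K[X], ⁅z, w⁆ = -⁅w, z⁆ :=
        fun z w => (lie_skew z w).symm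
      rcases hx with rfl | rfl | rfl <;> rcases hy with rfl | rfl | rfl
      · rw [hself]; exact zero_mem _
      · rw [br01]; exact Submodule.subset_span (by simp)
      · rw [br02]; exact Submodule.smul_mem _ _ (Submodule.subset_span (by simp))
      · rw [hskew, br01]; exact neg_mem (Submodule.subset_span (by simp))
      · rw [hself]; exact zero_mem _
      · rw [br12]; exact Submodule.subset_span (by simp)
      · rw [hskew, br02]
        exact neg_mem (Submodule.smul_mem _ _ (Submodule.subset_span (by simp)))
      · rw [hskew, br12]; exact neg_mem (Submodule.subset_span (by simp))
      · rw [hself]; exact zero_mem _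
    | zero => rw [lie_zero']; exact zero_mem _
    | add y z hy hz hy' hz' =>
      have e : ⁅x, y + z⁆ = ⁅x, y⁆ + ⁅x, z⁆ := lie_add x y z
      rw [e]; exact add_mem hy' hz'
    | smul a y hy hy' =>
      have e : ⁅x, a • y⁆ = a • ⁅x, y⁆ := lie_smul a x y
      rw [e]; exact Submodule.smul_mem _ _ hy'
  | zero =>
    have e : ⁅(0 : Derivation K K[X] K[X]), y⁆ = 0 := zero_lie y
    rw [e]; exact zero_mem _
  | add x z hx hz hx' hz' =>
    have e : ⁅x + z, y⁆ = ⁅x, y⁆ + ⁅z, y⁆ := add_lie x z y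
    rw [e]; exact add_mem hx' hz'
  | smul a x hx hx' =>
    have e : ⁅a • x, y⁆ = a • ⁅x, y⁆ := smul_lie a x y
    rw [e]; exact Submodule.smul_mem _ _ hx'

noncomputable def T : LieSubalgebra K (Derivation K K[X] K[X]) :=
  { Submodule.span K {Polynomial.mkDerivation K (1:K[X]), Polynomial.mkDerivation K (X:K[X]),
      Polynomial.mkDerivation K (X^2:K[X])} with
    lie_mem' := fun hx hy => lie_mem_span K hx hy }

lemma mem_T {x : Derivation K K[X] K[X]} :
    x ∈ T K ↔ x ∈ Submodule.span K {Polynomial.mkDerivation K (1:K[X]),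
      Polynomial.mkDerivation K (X:K[X]), Polynomial.mkDerivation K (X^2:K[X])} :=
  Iff.rfl

lemma T_toSubmodule : (T K).toSubmodule = Submodule.span K {Polynomial.mkDerivation K (1:K[X]),
    Polynomial.mkDerivation K (X:K[X]), Polynomial.mkDerivation K (X^2:K[X])} := rfl

lemma v3_li : LinearIndependent K (v3 K) := by
  rw [Fintype.linearIndependent_iff]
  intro g hg
  rw [Fin.sum_univ_three] at hg
  simp only [v3, Matrix.cons_val_zero, Matrix.cons_val_one, Matrix.head_cons,
    Matrix.cons_val_two, Matrix.tail_cons] at hg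
  rw [ksmul_mkd, ksmul_mkd, ksmul_mkd, ← map_add, ← map_add] at hg
  have hp : (C (g 0) * 1 + C (g 1) * X + C (g 2) * X ^ 2 : K[X]) = 0 :=
    mkd_inj K (by rw [hg, map_zero])
  have h0 := congrArg (fun p : K[X] => coeff p 0) hp
  have h1 := congrArg (fun p : K[X] => coeff p 1) hp
  have h2 := congrArg (fun p : K[X] => coeff p 2) hp
  simp [coeff_X_pow, coeff_C, coeff_X] at h0 h1 h2
  intro i; fin_cases i <;> assumption

/-! ### The sl₂ side -/

noncomputable def E2 : sl (Fin 2) K := single (R := K) 0 1 (by decide) 1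
noncomputable def F2 : sl (Fin 2) K := single (R := K) 1 0 (by decide) 1
noncomputable def H2 : sl (Fin 2) K :=
  ⟨Matrix.single 0 0 1 - Matrix.single 1 1 1,
   LinearMap.mem_ker.mpr (by
    simp [Matrix.traceLinearMap, Matrix.trace, Matrix.diag, Matrix.single,
      Fin.sum_univ_two])⟩

lemma sl_coe_smul (a : K) (x : sl (Fin 2) K) :
    ((a • x : sl (Fin 2) K) : Matrix (Fin 2) (Fin 2) K) = a • (x : Matrix (Fin 2) (Fin 2) K) := rfl

noncomputable def w3 : Fin 3 → sl (Fin 2) K := ![E2 K, (-(1/2) : K) • H2 K, -(F2 K)]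

lemma w3_brackets :
    ⁅w3 K 0, w3 K 1⁆ = w3 K 0 ∧ ⁅w3 K 0, w3 K 2⁆ = (2:K) • w3 K 1 ∧
      ⁅w3 K 1, w3 K 2⁆ = w3 K 2 := by
  refine ⟨?_, ?_, ?_⟩ <;>
  · apply Subtype.ext
    show _ * _ - _ * _ = _
    ext i j
    fin_cases i <;> fin_cases j <;>
      simp [w3, E2, F2, H2, val_single, sl_coe_smul, Matrix.mul_apply, Matrix.single,
        Fin.sum_univ_two, Matrix.smul_apply, Matrix.sub_apply, Matrix.of_apply, Pi.smul_apply,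
        Pi.sub_apply, smul_eq_mul] <;>
      norm_num

lemma w3_li : LinearIndependent K (w3 K) := by
  rw [Fintype.linearIndependent_iff]
  intro g hg
  rw [Fin.sum_univ_three] at hg
  have hm := congrArg Subtype.val hg
  have h01 := congrFun (congrFun hm 0) 1
  have h00 := congrFun (congrFun hm 0) 0
  have h10 := congrFun (congrFun hm 1) 0
  simp [w3, E2, F2, H2, val_single, sl_coe_smul, Matrix.single] at h01 h00 h10
  intro i; fin_cases i <;> simp_all

lemma sl_trace (x : sl (Fin 2) K) : (x : Matrix (Fin 2) (Fin 2) K) 0 0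
    + (x : Matrix (Fin 2) (Fin 2) K) 1 1 = 0 := by
  have h : Matrix.trace (x : Matrix (Fin 2) (Fin 2) K) = 0 := x.2
  simpa [Matrix.trace, Matrix.diag, Fin.sum_univ_two] using h

lemma w3_span : ⊤ ≤ Submodule.span K (Set.range (w3 K)) := by
  intro x _
  rw [Submodule.mem_span_range_iff_exists_fun]
  refine ⟨![(x : Matrix (Fin 2) (Fin 2) K) 0 1, -2 * (x : Matrix (Fin 2) (Fin 2) K) 0 0,
    -((x : Matrix (Fin 2) (Fin 2) K) 1 0)], ?_⟩
  have hx11 : (x : Matrix (Fin 2) (Fin 2) K) 1 1 = -((x : Matrix (Fin 2) (Fin 2) K) 0 0) := by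
    linear_combination sl_trace K x
  rw [Fin.sum_univ_three]
  apply Subtype.ext
  show _ = (x : Matrix (Fin 2) (Fin 2) K)
  ext i j
  fin_cases i <;> fin_cases j <;>
    simp [w3, E2, F2, H2, val_single, sl_coe_smul, Matrix.single, hx11] <;> ring

/-! ### The isomorphism -/

lemma iso_aux (N : LieSubalgebra K (Derivation K K[X] K[X]))
    (hN : N.toSubmodule = Submodule.span K {Polynomial.mkDerivation K (1:K[X]),
      Polynomial.mkDerivation K (X:K[X]), Polynomial.mkDerivation K (X^2:K[X])}) :
    Nonempty (N ≃ₗ⁅K⁆ sl (Fin 2) K) := by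
  have hsp : Submodule.span K (Set.range (v3 K)) = N.toSubmodule := by
    rw [v3_range, hN]
  let toN : ↥(Submodule.span K (Set.range (v3 K))) ≃ₗ[K] ↥N :=
    { toFun := fun x => ⟨x.1, by rw [← LieSubalgebra.mem_toSubmodule, ← hsp]; exact x.2⟩,
      invFun := fun x => ⟨x.1, by
        rw [hsp, LieSubalgebra.mem_toSubmodule]; exact x.2⟩,
      map_add' := fun _ _ => rfl, map_smul' := fun _ _ => rfl,
      left_inv := fun _ => rfl, right_inv := fun _ => rfl }
  let b0 : Module.Basis (Fin 3) K ↥(Submodule.span K (Set.range (v3 K))) := Module.Basis.span (v3_li K)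
  let bd : Module.Basis (Fin 3) K ↥N := b0.map toN
  have bd_coe : ∀ i, (bd i : Derivation K K[X] K[X]) = v3 K i := by
    intro i
    have h1 : bd i = toN (b0 i) := Module.Basis.map_apply b0 toN i
    have h2 : ((toN (b0 i) : ↥N) : Derivation K K[X] K[X])
        = ((b0 i : ↥(Submodule.span K (Set.range (v3 K)))) : Derivation K K[X] K[X]) := rfl
    rw [h1, h2, Module.Basis.span_apply]
  let c3 : Module.Basis (Fin 3) K ↥(sl (Fin 2) K) := Module.Basis.mk (w3_li K) (w3_span K)
  have c3_app : ∀ i, c3 i = w3 K i := Module.Basis.mk_apply (w3_li K) (w3_span K)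
  let e : ↥N ≃ₗ[K] ↥(sl (Fin 2) K) := bd.equiv c3 (Equiv.refl _)
  have he : ∀ i, e (bd i) = w3 K i := by
    intro i; rw [Module.Basis.equiv_apply, Equiv.refl_apply, c3_app]
  have coe_smul_N : ∀ (a : K) (x : ↥N),
      ((a • x : ↥N) : Derivation K K[X] K[X]) = a • (x : Derivation K K[X] K[X]) :=
    fun _ _ => rfl
  -- bracket identities in N
  have hbd01 : ⁅bd 0, bd 1⁆ = bd 0 := by
    apply Subtype.ext
    rw [LieSubalgebra.coe_bracket]
    simp only [bd_coe]
    simp only [v3, Matrix.cons_val_zero, Matrix.cons_val_one, Matrix.head_cons]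
    exact br01 K
  have hbd02 : ⁅bd 0, bd 2⁆ = (2:K) • bd 1 := by
    apply Subtype.ext
    rw [LieSubalgebra.coe_bracket, coe_smul_N]
    simp only [bd_coe]
    simp only [v3, Matrix.cons_val_zero, Matrix.cons_val_one, Matrix.head_cons,
      Matrix.cons_val_two, Matrix.tail_cons]
    exact br02 K
  have hbd12 : ⁅bd 1, bd 2⁆ = bd 2 := by
    apply Subtype.ext
    rw [LieSubalgebra.coe_bracket]
    simp only [bd_coe]
    simp only [v3, Matrix.cons_val_one, Matrix.head_cons, Matrix.cons_val_two, Matrix.tail_cons]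
    exact br12 K
  obtain ⟨hw01, hw02, hw12⟩ := w3_brackets K
  have key : ∀ i j : Fin 3, e ⁅bd i, bd j⁆ = ⁅e (bd i), e (bd j)⁆ := by
    intro i j
    fin_cases i <;> fin_cases j
    · show e ⁅bd 0, bd 0⁆ = ⁅e (bd 0), e (bd 0)⁆
      rw [lie_self, lie_self, map_zero]
    · show e ⁅bd 0, bd 1⁆ = ⁅e (bd 0), e (bd 1)⁆
      rw [hbd01]; simp only [he]; rw [hw01]
    · show e ⁅bd 0, bd 2⁆ = ⁅e (bd 0), e (bd 2)⁆
      rw [hbd02, map_smul]; simp only [he]; rw [hw02]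
    · show e ⁅bd 1, bd 0⁆ = ⁅e (bd 1), e (bd 0)⁆
      rw [show ⁅bd 1, bd 0⁆ = -⁅bd 0, bd 1⁆ from (lie_skew _ _).symm, hbd01, map_neg]
      simp only [he]
      rw [show ⁅w3 K 1, w3 K 0⁆ = -⁅w3 K 0, w3 K 1⁆ from (lie_skew _ _).symm, hw01]
    · show e ⁅bd 1, bd 1⁆ = ⁅e (bd 1), e (bd 1)⁆
      rw [lie_self, lie_self, map_zero]
    · show e ⁅bd 1, bd 2⁆ = ⁅e (bd 1), e (bd 2)⁆
      rw [hbd12]; simp only [he]; rw [hw12]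
    · show e ⁅bd 2, bd 0⁆ = ⁅e (bd 2), e (bd 0)⁆
      rw [show ⁅bd 2, bd 0⁆ = -⁅bd 0, bd 2⁆ from (lie_skew _ _).symm, hbd02, map_neg, map_smul]
      simp only [he]
      rw [show ⁅w3 K 2, w3 K 0⁆ = -⁅w3 K 0, w3 K 2⁆ from (lie_skew _ _).symm, hw02]
    · show e ⁅bd 2, bd 1⁆ = ⁅e (bd 2), e (bd 1)⁆
      rw [show ⁅bd 2, bd 1⁆ = -⁅bd 1, bd 2⁆ from (lie_skew _ _).symm, hbd12, map_neg]
      simp only [he]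
      rw [show ⁅w3 K 2, w3 K 1⁆ = -⁅w3 K 1, w3 K 2⁆ from (lie_skew _ _).symm, hw12]
    · show e ⁅bd 2, bd 2⁆ = ⁅e (bd 2), e (bd 2)⁆
      rw [lie_self, lie_self, map_zero]
  let B1 : ↥N →ₗ[K] ↥N →ₗ[K] ↥(sl (Fin 2) K) :=
    LinearMap.mk₂ K (fun x y => e ⁅x, y⁆)
      (fun x x' y => by simp only [add_lie, map_add])
      (fun a x y => by simp only [smul_lie, map_smul])
      (fun x y y' => by simp only [lie_add, map_add])
      (fun a x y => by simp only [lie_smul, map_smul])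
  let B2 : ↥N →ₗ[K] ↥N →ₗ[K] ↥(sl (Fin 2) K) :=
    LinearMap.mk₂ K (fun x y => ⁅e x, e y⁆)
      (fun x x' y => by simp only [map_add, add_lie])
      (fun a x y => by simp only [map_smul, smul_lie])
      (fun x y y' => by simp only [map_add, lie_add])
      (fun a x y => by simp only [map_smul, lie_smul])
  have hB : B1 = B2 := LinearMap.ext_basis bd bd (fun i j => key i j)
  have hlie : ∀ x y : ↥N, e ⁅x, y⁆ = ⁅e x, e y⁆ := fun x y => LinearMap.congr_fun₂ hB x y
  exact ⟨{ toLinearMap := e.toLinearMap, map_lie' := fun {x y} => hlie x y,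
           invFun := e.symm, left_inv := e.left_inv, right_inv := e.right_inv }⟩

end Stmt19Aux

open Stmt19Aux

/-- In the Lie algebra of `K`-linear derivations of `K[w]`, the elements
`A₀ = −2αw²(d/dw)`, `A₁ = −(d/dw)`, `Y = 0` satisfy relations (R1)–(R6); moreover, for
`α ≠ 0`, the Lie subalgebra generated by `A₀` and `A₁` is the 3-dimensional span of
`d/dw, w(d/dw), w²(d/dw)`, which is isomorphic to `sl₂(K)`. -/
theorem stmt_19 {K : Type*} [Field K] [CharZero K] (α β : K) :
    ∀ D A₀ A₁ Y : Derivation K K[X] K[X],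
    D = Polynomial.derivative' →
    A₀ = (C (-(2 * α)) * X ^ 2 : K[X]) • D →
    A₁ = -D →
    Y = 0 →
    (⁅A₁, ⁅A₁, ⁅A₀, A₁⁆⁆⁆ = 0 ∧
     (4 * α) • ⁅A₀, A₁⁆ + ⁅A₀, ⁅A₁, ⁅A₀, A₁⁆⁆⁆ = 0 ∧
     ⁅A₁, ⁅A₁, ⁅A₀, ⁅A₀, ⁅A₀, A₁⁆⁆⁆⁆⁆ = 0 ∧
     ⁅A₁, ⁅A₀, ⁅A₀, ⁅A₀, ⁅A₀, A₁⁆⁆⁆⁆⁆ - β • ⁅A₀, ⁅A₀, ⁅A₀, A₁⁆⁆⁆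
       + ((1 : K) / 2) • ⁅A₀, ⁅A₁, ⁅A₀, ⁅A₀, ⁅A₀, A₁⁆⁆⁆⁆⁆ = 0 ∧
     ⁅A₁, Y⁆ + ⁅A₀, ⁅A₀, ⁅A₀, ⁅A₀, ⁅A₀, A₁⁆⁆⁆⁆⁆ = 0 ∧
     ⁅A₀, Y⁆ = 0) ∧
    (α ≠ 0 →
      (LieSubalgebra.lieSpan K (Derivation K K[X] K[X]) {A₀, A₁}).toSubmodule
        = Submodule.span K {D, (X : K[X]) • D, (X ^ 2 : K[X]) • D} ∧
      Nonempty
        ((LieSubalgebra.lieSpan K (Derivation K K[X] K[X]) {A₀, A₁}) ≃ₗ⁅K⁆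
          (LieAlgebra.SpecialLinear.sl (Fin 2) K))) := by
  rintro D A₀ A₁ Y rfl rfl rfl rfl
  constructor
  · -- the relations
    rw [D_eq_mkd, psmul_mkd, mul_one, neg_mkd]
    set a0 := Polynomial.mkDerivation K (C (-(2*α)) * X^2) with ha0
    set a1 := Polynomial.mkDerivation K (-1 : K[X]) with ha1
    have h1 : ⁅a0, a1⁆ = Polynomial.mkDerivation K (C (-(4*α)) * X) := by
      rw [ha0, ha1, mkd_bracket]; apply mkd_congr
      simp only [derivative_one, derivative_neg, derivative_mul, derivative_C, derivative_X_pow,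
        derivative_X, derivative_ofNat, derivative_natCast, derivative_pow, derivative_zero,
        map_mul, map_neg, map_ofNat, map_natCast, Nat.cast_ofNat]
      ring
    have h2 : ⁅a0, Polynomial.mkDerivation K (C (-(4*α)) * X)⁆
        = Polynomial.mkDerivation K (C (-(8*α^2)) * X^2) := by
      rw [ha0, mkd_bracket]; apply mkd_congr
      simp only [derivative_one, derivative_neg, derivative_mul, derivative_C, derivative_X_pow,
        derivative_X, derivative_ofNat, derivative_natCast, derivative_pow, derivative_zero,
        map_mul, map_neg, map_ofNat, map_natCast, Nat.cast_ofNat, map_pow]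
      ring
    have h3 : ⁅a0, Polynomial.mkDerivation K (C (-(8*α^2)) * X^2)⁆ = 0 := by
      rw [ha0, mkd_bracket]; apply mkd_eq_zero
      simp only [derivative_one, derivative_neg, derivative_mul, derivative_C, derivative_X_pow,
        derivative_X, derivative_ofNat, derivative_natCast, derivative_pow, derivative_zero,
        map_mul, map_neg, map_ofNat, map_natCast, Nat.cast_ofNat, map_pow]
      ring
    have h4 : ⁅a1, Polynomial.mkDerivation K (C (-(4*α)) * X)⁆
        = Polynomial.mkDerivation K (C (4*α)) := by
      rw [ha1, mkd_bracket]; apply mkd_congr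
      simp only [derivative_one, derivative_neg, derivative_mul, derivative_C, derivative_X_pow,
        derivative_X, derivative_ofNat, derivative_natCast, derivative_pow, derivative_zero,
        map_mul, map_neg, map_ofNat, map_natCast, Nat.cast_ofNat]
      ring
    have h5 : ⁅a1, Polynomial.mkDerivation K (C (4*α))⁆ = 0 := by
      rw [ha1, mkd_bracket]; apply mkd_eq_zero
      simp only [derivative_one, derivative_neg, derivative_C, derivative_mul]
      ring
    have h6 : ⁅a0, Polynomial.mkDerivation K (C (4*α))⁆
        = Polynomial.mkDerivation K (C (16*α^2) * X) := by
      rw [ha0, mkd_bracket]; apply mkd_congr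
      simp only [derivative_one, derivative_neg, derivative_mul, derivative_C, derivative_X_pow,
        derivative_X, derivative_ofNat, derivative_natCast, derivative_pow, derivative_zero,
        map_mul, map_neg, map_ofNat, map_natCast, Nat.cast_ofNat, map_pow]
      ring
    refine ⟨?_, ?_, ?_, ?_, ?_, ?_⟩
    · rw [h1, h4, h5]
    · rw [h1, h4, h6, ksmul_mkd, ← map_add]
      apply mkd_eq_zero
      simp only [map_mul, map_neg, map_ofNat, map_pow]
      ring
    · rw [h1, h2, h3]
      simp [lie_zero']
    · rw [h1, h2, h3]
      simp [lie_zero']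
    · rw [h1, h2, h3]
      simp [lie_zero']
    · simp [lie_zero']
  · -- the Lie subalgebra generated by A₀, A₁
    intro hα
    rw [D_eq_mkd]
    rw [show ((C (-(2 * α)) * X ^ 2 : K[X]) • Polynomial.mkDerivation K (1:K[X]))
          = Polynomial.mkDerivation K (C (-(2 * α)) * X ^ 2) from by rw [psmul_mkd, mul_one],
        show ((X : K[X]) • Polynomial.mkDerivation K (1:K[X]))
          = Polynomial.mkDerivation K (X:K[X]) from by rw [psmul_mkd, mul_one],
        show ((X^2 : K[X]) • Polynomial.mkDerivation K (1:K[X]))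
          = Polynomial.mkDerivation K (X^2:K[X]) from by rw [psmul_mkd, mul_one]]
    set N := LieSubalgebra.lieSpan K (Derivation K K[X] K[X])
      {Polynomial.mkDerivation K (C (-(2 * α)) * X ^ 2), -(Polynomial.mkDerivation K 1)} with hNdef
    have h2α : (-(2 * α) : K) ≠ 0 := by
      simp [hα]
    have hA1 : -(Polynomial.mkDerivation K (1:K[X])) ∈ N :=
      LieSubalgebra.subset_lieSpan (by simp)
    have hA0 : Polynomial.mkDerivation K (C (-(2 * α)) * X ^ 2) ∈ N :=
      LieSubalgebra.subset_lieSpan (by simp)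
    have hD : Polynomial.mkDerivation K (1:K[X]) ∈ N := by
      simpa using neg_mem hA1
    have hX2 : Polynomial.mkDerivation K (X^2 : K[X]) ∈ N := by
      have heq : Polynomial.mkDerivation K (X^2 : K[X])
          = (-(2*α))⁻¹ • Polynomial.mkDerivation K (C (-(2*α)) * X^2) := by
        rw [ksmul_mkd, ← mul_assoc, ← C_mul, inv_mul_cancel₀ h2α, C_1, one_mul]
      rw [heq]
      exact N.smul_mem _ hA0
    have hX : Polynomial.mkDerivation K (X : K[X]) ∈ N := by
      have hb : ⁅Polynomial.mkDerivation K (1:K[X]), Polynomial.mkDerivation K (X^2:K[X])⁆ ∈ N :=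
        N.lie_mem hD hX2
      rw [br02] at hb
      have heq : Polynomial.mkDerivation K (X : K[X])
          = ((1:K)/2) • ((2:K) • Polynomial.mkDerivation K (X : K[X])) := by
        rw [smul_smul]; norm_num
      rw [heq]
      exact N.smul_mem _ hb
    have hNsub : N.toSubmodule = Submodule.span K {Polynomial.mkDerivation K (1:K[X]),
        Polynomial.mkDerivation K (X:K[X]), Polynomial.mkDerivation K (X^2:K[X])} := by
      apply le_antisymm
      · rw [← T_toSubmodule]
        refine (LieSubalgebra.toSubmodule_le_toSubmodule _ _).mpr
          (LieSubalgebra.lieSpan_le.mpr ?_)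
        rintro z hz
        simp only [Set.mem_insert_iff, Set.mem_singleton_iff] at hz
        rcases hz with rfl | rfl
        · apply (LieSubalgebra.mem_coe _).mpr
          rw [mem_T]
          have heq : Polynomial.mkDerivation K (C (-(2*α)) * X^2)
              = (-(2*α)) • Polynomial.mkDerivation K (X^2 : K[X]) := by rw [ksmul_mkd]
          rw [heq]
          exact Submodule.smul_mem _ _ (Submodule.subset_span (by simp))
        · apply (LieSubalgebra.mem_coe _).mpr
          rw [mem_T]
          exact neg_mem (Submodule.subset_span (by simp))
      · rw [Submodule.span_le]
        rintro z hz
        simp only [Set.mem_insert_iff, Set.mem_singleton_iff] at hz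
        rcases hz with rfl | rfl | rfl
        · exact (LieSubalgebra.mem_toSubmodule _).mpr hD
        · exact (LieSubalgebra.mem_toSubmodule _).mpr hX
        · exact (LieSubalgebra.mem_toSubmodule _).mpr hX2
    exact ⟨hNsub, iso_aux K N hNsub⟩
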